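/- Let D and E be two bounded open sets in ℍ with D ⊂ E. Then co(D) ⊂ co(E) and inf{d̃_H(p,q) : p ∈ co(D), q ∈ ℍ ∖ co(E)} ≥ inf{d̃_H(p,q) : p ∈ D, q ∈ ℍ ∖ E}; that is, taking h-convex hulls does not decrease the shortest right-invariant gauge distance between the sets' boundaries. -/
import Mathlib


noncomputable section

/-- The underlying space of the first Heisenberg group: `ℝ³`. -/
abbrev Heis := ℝ × ℝ × ℝ

/-- Heisenberg group multiplication. -/
def hmul (p q : Heis) : Heis :=
  (p.1 + q.1, p.2.1 + q.2.1, p.2.2 + q.2.2 + (p.1 * q.2.1 - q.1 * p.2.1) / 2)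

/-- Heisenberg group inverse. -/
def hinv (p : Heis) : Heis := (-p.1, -p.2.1, -p.2.2)

/-- The horizontal plane `ℍ_p = p · ℍ₀` through `p`. -/
def hplane (p : Heis) : Set Heis := {q | ∃ h : Heis, h.2.2 = 0 ∧ q = hmul p h}

/-- The (Euclidean) segment `[p,q]`. -/
def hseg (p q : Heis) : Set Heis :=
  {w | ∃ l : ℝ, 0 ≤ l ∧ l ≤ 1 ∧ w = (1 - l) • p + l • q}

/-- The half-open segment `(p,q]`. -/
def hsegHalfOpen (p q : Heis) : Set Heis :=
  {w | ∃ l : ℝ, 0 < l ∧ l ≤ 1 ∧ w = (1 - l) • p + l • q}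

/-- A set `E ⊆ ℍ` is h-convex if for every `p ∈ E` and `q ∈ ℍ_p ∩ E`,
the horizontal segment `[p,q]` lies in `E`. -/
def IsHConvex (E : Set Heis) : Prop :=
  ∀ p ∈ E, ∀ q ∈ hplane p, q ∈ E → ∀ w ∈ hseg p q, w ∈ E

/-- A set `E` is h-convex up to boundary if for every `p ∈ ∂E` and `q ∈ ℍ_p ∩ E`,
the half-open segment `(p,q]` lies in `E`. -/
def IsHConvexUpToBoundary (E : Set Heis) : Prop :=
  ∀ p ∈ frontier E, ∀ q ∈ hplane p, q ∈ E → ∀ w ∈ hsegHalfOpen p q, w ∈ E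

/-- A function `u` is h-quasiconvex on `Ω` if `u(w) ≤ max (u p) (u q)` for all
`p ∈ Ω`, `q ∈ ℍ_p ∩ Ω` and `w ∈ [p,q]`. -/
def IsHQuasiconvexOn (Ω : Set Heis) (u : Heis → ℝ) : Prop :=
  ∀ p ∈ Ω, ∀ q ∈ hplane p, q ∈ Ω → ∀ w ∈ hseg p q, u w ≤ max (u p) (u q)

/-- `Qf` is the h-quasiconvex envelope of `f` on `Ω`: the greatest h-quasiconvex
function majorized by `f` on `Ω` (equivalently, the pointwise supremum of all
h-quasiconvex minorants of `f`). -/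
def IsHQCEnvelopeOn (Ω : Set Heis) (f Qf : Heis → ℝ) : Prop :=
  IsHQuasiconvexOn Ω Qf ∧ (∀ p ∈ Ω, Qf p ≤ f p) ∧
    ∀ g : Heis → ℝ, IsHQuasiconvexOn Ω g → (∀ p ∈ Ω, g p ≤ f p) → ∀ p ∈ Ω, g p ≤ Qf p

/-- The Korányi gauge. -/
def kGauge (p : Heis) : ℝ := ((p.1 ^ 2 + p.2.1 ^ 2) ^ 2 + 16 * p.2.2 ^ 2) ^ ((1 : ℝ) / 4)

/-- The left-invariant gauge metric `d_H(p,q) = |p⁻¹ · q|_G`. -/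
def dLeft (p q : Heis) : ℝ := kGauge (hmul (hinv p) q)

/-- The right-invariant gauge metric `d̃_H(p,q) = |p · q⁻¹|_G`. -/
def dRight (p q : Heis) : ℝ := kGauge (hmul p (hinv q))

/-- The gauge ball `B_r(p) = {q : |p⁻¹ · q|_G < r}`. -/
def gball (p : Heis) (r : ℝ) : Set Heis := {q | dLeft p q < r}

/-- The horizontal gradient `∇_H φ(p) = (X₁ φ(p), X₂ φ(p))`, where
`X₁ = ∂_x − (y/2) ∂_z` and `X₂ = ∂_y + (x/2) ∂_z`. -/
def hGrad (φ : Heis → ℝ) (p : Heis) : ℝ × ℝ :=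
  (fderiv ℝ φ p ((1, 0, -p.2.1 / 2) : Heis), fderiv ℝ φ p ((0, 1, p.1 / 2) : Heis))

/-- The pairing `⟨∇_H φ(p), (p⁻¹ · ξ)_h⟩`. -/
def hpair (φ : Heis → ℝ) (p ξ : Heis) : ℝ :=
  (hGrad φ p).1 * (hmul (hinv p) ξ).1 + (hGrad φ p).2 * (hmul (hinv p) ξ).2.1

/-- Local boundedness of `u` on `A`. -/
def LocBddOn (A : Set Heis) (u : Heis → ℝ) : Prop :=
  ∀ p ∈ A, ∃ s ∈ nhds p, ∃ C : ℝ, ∀ q ∈ s ∩ A, |u q| ≤ C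

/-- `u` is a viscosity subsolution of `u + H(p, u, ∇_H u) = f` in `Ω`, where
`H(p, u, ∇_H u) = sup {⟨∇_H u(p), (p⁻¹·ξ)_h⟩ : ξ ∈ ℍ_p ∩ Ω, u(ξ) < u(p)}`
(with the supremum understood to be `0` when `∇_H φ(p) = 0`). -/
def IsSubSoln (Ω : Set Heis) (f u : Heis → ℝ) : Prop :=
  UpperSemicontinuousOn u Ω ∧ LocBddOn Ω u ∧
    ∀ p ∈ Ω, ∀ φ : Heis → ℝ, ContDiff ℝ 1 φ →
      IsMaxOn (fun q => u q - φ q) Ω p →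
        (∀ ξ ∈ hplane p, ξ ∈ Ω → u ξ < u p → u p + hpair φ p ξ ≤ f p) ∧
        (hGrad φ p = 0 → u p ≤ f p)

/-- `u` is a viscosity supersolution of `u + H(p, u, ∇_H u) = f` in `Ω`, where for
supersolutions `H(p, u, ∇_H u) = sup {⟨∇_H u(p), (p⁻¹·ξ)_h⟩ : ξ ∈ ℍ_p ∩ Ω, u(ξ) ≤ u(p)}`.
(The set `Ŝ_p(u)` always contains `p` itself, so the inequality
`u(p) + sup ≥ f(p)` is expressed in ε-form.) -/
def IsSuperSoln (Ω : Set Heis) (f u : Heis → ℝ) : Prop :=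
  LowerSemicontinuousOn u Ω ∧ LocBddOn Ω u ∧
    ∀ p ∈ Ω, ∀ φ : Heis → ℝ, ContDiff ℝ 1 φ →
      IsMinOn (fun q => u q - φ q) Ω p →
        ∀ ε > 0, ∃ ξ ∈ hplane p, ξ ∈ Ω ∧ u ξ ≤ u p ∧ f p - ε ≤ u p + hpair φ p ξ

/-- `w` is the upper semicontinuous envelope of `v` on `A`: the smallest
upper semicontinuous function on `A` that majorizes `v`. -/
def IsUscEnvOn (A : Set Heis) (v w : Heis → ℝ) : Prop :=
  UpperSemicontinuousOn w A ∧ (∀ q ∈ A, v q ≤ w q) ∧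
    ∀ z : Heis → ℝ, UpperSemicontinuousOn z A → (∀ q ∈ A, v q ≤ z q) → ∀ q ∈ A, w q ≤ z q

/-- `w` is the lower semicontinuous envelope of `v` on `A`: the largest
lower semicontinuous function on `A` minorized by `v`. -/
def IsLscEnvOn (A : Set Heis) (v w : Heis → ℝ) : Prop :=
  LowerSemicontinuousOn w A ∧ (∀ q ∈ A, w q ≤ v q) ∧
    ∀ z : Heis → ℝ, LowerSemicontinuousOn z A → (∀ q ∈ A, z q ≤ v q) → ∀ q ∈ A, z q ≤ w q

/-- The h-convex hull of `E`: the intersection of all h-convex sets containing `E`. -/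
def hconvexHull (E : Set Heis) : Set Heis := ⋂₀ {D : Set Heis | IsHConvex D ∧ E ⊆ D}

/-- The direct convexification operator
`T[f](w) = inf {max (f p) (f q) : w ∈ [p,q], p ∈ Ω, q ∈ Ω ∩ ℍ_p}`. -/
def Tconv (Ω : Set Heis) (f : Heis → ℝ) : Heis → ℝ := fun w =>
  sInf {y | ∃ p ∈ Ω, ∃ q ∈ hplane p, q ∈ Ω ∧ w ∈ hseg p q ∧ y = max (f p) (f q)}

lemma hmul_assoc' (a b c : Heis) : hmul (hmul a b) c = hmul a (hmul b c) := by
  simp only [hmul, Prod.mk.injEq]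
  refine ⟨by ring, by ring, by ring⟩

lemma hmul_affine (g p q : Heis) (l : ℝ) :
    hmul g ((1 - l) • p + l • q) = (1 - l) • hmul g p + l • hmul g q := by
  simp only [hmul, Prod.smul_def, Prod.mk_add_mk, smul_eq_mul, Prod.fst_add, Prod.snd_add,
    Prod.smul_fst, Prod.smul_snd, Prod.mk.injEq]
  refine ⟨by ring, by ring, by ring⟩

lemma translate_hconvex (g : Heis) {A : Set Heis} (hA : IsHConvex A) :
    IsHConvex {p | hmul g p ∈ A} := by
  intro p hp q hq hqA w hw
  obtain ⟨h, hz, rfl⟩ := hq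
  obtain ⟨l, hl0, hl1, rfl⟩ := hw
  exact hA (hmul g p) hp (hmul g (hmul p h)) ⟨h, hz, (hmul_assoc' g p h).symm⟩ hqA _
    ⟨l, hl0, hl1, hmul_affine g p (hmul p h) l⟩

lemma subset_hconvexHull (E : Set Heis) : E ⊆ hconvexHull E := by
  intro x hx A hA
  exact hA.2 hx

lemma hconvexHull_isHConvex (E : Set Heis) : IsHConvex (hconvexHull E) := by
  intro p hp q hq hqE w hw A hA
  exact hA.1 p (hp A hA) q hq (hqE A hA) w hw

lemma hconvexHull_min {E A : Set Heis} (hA : IsHConvex A) (hEA : E ⊆ A) :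
    hconvexHull E ⊆ A := fun x hx => hx A ⟨hA, hEA⟩

lemma cancel1 (g p : Heis) : hmul p (hinv (hmul (hinv g) p)) = g := by
  refine Prod.ext ?_ (Prod.ext ?_ ?_) <;> simp [hmul, hinv] <;> ring

lemma cancel2 (p q : Heis) : hmul (hinv (hmul p (hinv q))) p = q := by
  refine Prod.ext ?_ (Prod.ext ?_ ?_) <;> simp [hmul, hinv] <;> ring

/-- Theorem 5.4 (Quantitative inclusion principle): for bounded open sets
`D ⊆ E` in `ℍ`, one has `co(D) ⊆ co(E)` and taking h-convex hulls does not
decrease the shortest right-invariant gauge distance between `D` and `ℍ ∖ E`: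
`inf {d̃_H(p,q) : p ∈ co(D), q ∉ co(E)} ≥ inf {d̃_H(p,q) : p ∈ D, q ∉ E}`. -/
theorem quantitative_inclusion_principle
    (D E : Set Heis) (hDb : Bornology.IsBounded D) (hEb : Bornology.IsBounded E)
    (hDo : IsOpen D) (hEo : IsOpen E) (hDE : D ⊆ E) :
    hconvexHull D ⊆ hconvexHull E ∧
    ∀ m : ℝ, (∀ p ∈ D, ∀ q ∉ E, m ≤ dRight p q) →
      ∀ p ∈ hconvexHull D, ∀ q ∉ hconvexHull E, m ≤ dRight p q := by
  constructor
  · exact hconvexHull_min (hconvexHull_isHConvex E)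
      (hDE.trans (subset_hconvexHull E))
  · intro m hm p hp q hq
    set A : Set Heis := {p | ∀ g : Heis, kGauge g < m → hmul (hinv g) p ∈ hconvexHull E}
      with hAdef
    have hAconv : IsHConvex A := by
      intro p hp q hq hqA w hw g hg
      exact translate_hconvex (hinv g) (hconvexHull_isHConvex E) p (hp g hg) q hq
        (hqA g hg) w hw
    have hDA : D ⊆ A := by
      intro p hpD g hg
      by_contra hnot
      have hnE : hmul (hinv g) p ∉ E := fun h => hnot (subset_hconvexHull E h)
      have := hm p hpD _ hnE
      rw [dRight, cancel1] at this
      exact absurd hg (not_lt.mpr this)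
    have hpA : p ∈ A := hconvexHull_min hAconv hDA hp
    by_contra hlt
    push_neg at hlt
    have := hpA (hmul p (hinv q)) hlt
    rw [cancel2] at this
    exact hq this
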